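/- Let M be a finite simple matroid on n elements whose dual matroid M* is also simple, with girth d* and cogirth d, and set r = n − d − d* + 2. Let P_0(T), …, P_r(T) be the unique rational-function coefficients with χ_M(S,T) = Σ_{i=0}^{r} P_i(T) X_{n,d+i}(S,T). Then M is a uniform matroid if and only if P_0(T) = 1 and P_i(T) = 0 for all i ≥ 1. -/

import Mathlib

open Matroid Polynomial Finset
open scoped Classical

namespace PaperMatroid

variable {α : Type*}

/-- The rank of a finset in a matroid on a finite type: the maximum size of an
independent subset. -/
noncomputable def mrk [Fintype α] (M : Matroid α) (x : Finset α) : ℕ :=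
  (x.powerset.filter (fun (I : Finset α) => M.Indep (I : Set α))).sup Finset.card

/-- A circuit of a matroid: a minimal dependent set. -/
def IsCircuit (M : Matroid α) (C : Set α) : Prop :=
  M.Dep C ∧ ∀ ⦃D⦄, D ⊂ C → M.Indep D

/-- The girth of a matroid: the minimum size of a circuit. -/
noncomputable def girth (M : Matroid α) : ℕ :=
  sInf {n | ∃ C, IsCircuit M C ∧ C.ncard = n}

/-- The cogirth of a matroid: the girth of the dual matroid, i.e. the minimum
size of a cocircuit. -/
noncomputable def cogirth (M : Matroid α) : ℕ := girth M✶

/-- The finset of (finsets corresponding to) flats of a matroid on a finite type. -/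
noncomputable def flats [Fintype α] (M : Matroid α) : Finset (Finset α) :=
  Finset.univ.filter fun F => M.IsFlat ↑F

/-- The Möbius function of the lattice of flats of a matroid:
`μ(X,X) = 1`, `μ(X,Y) = -Σ_{X ⊆ Z ⊊ Y, Z a flat} μ(X,Z)` for `X ⊊ Y`, and `0` otherwise. -/
noncomputable def mob [Fintype α] (M : Matroid α) (X Y : Finset α) : ℤ :=
  if X = Y then 1
  else if X ⊆ Y then
    -∑ Z ∈ ((flats M).filter fun Z => X ⊆ Z ∧ Z ⊂ Y).attach, mob M X Z.1
  else 0
termination_by Y.card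
decreasing_by
  · have hZ := Z.2
    simp only [Finset.mem_filter] at hZ
    exact Finset.card_lt_card hZ.2.2

/-- The Möbius polynomial of a matroid, as a polynomial in `S` (the outer
variable) whose coefficients are polynomials in `T` (the inner variable):
`μ_M(S,T) = Σ_{x ∈ L} Σ_{x ⊆ y ∈ L} μ(x,y) S^{r(x)} T^{k - r(y)}`,
where `L` is the lattice of flats and `k` is the rank of `M`. -/
noncomputable def mobiusPoly [Fintype α] (M : Matroid α) : Polynomial (Polynomial ℤ) :=
  ∑ x ∈ flats M, ∑ y ∈ (flats M).filter (fun y => x ⊆ y),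
    mob M x y • (Polynomial.X ^ (mrk M x) *
      Polynomial.C (Polynomial.X ^ (mrk M Finset.univ - mrk M y)))

/-- The coboundary polynomial of a matroid, as a polynomial in `S` (the outer
variable) whose coefficients are polynomials in `T` (the inner variable):
`χ_M(S,T) = Σ_{x ∈ L} Σ_{x ⊆ y ∈ L} μ(x,y) S^{|x|} T^{k - r(y)}`,
where `L` is the lattice of flats, `|x|` is the number of ground-set elements
of the flat `x`, and `k` is the rank of `M`. -/
noncomputable def cobPoly [Fintype α] (M : Matroid α) : Polynomial (Polynomial ℤ) :=
  ∑ x ∈ flats M, ∑ y ∈ (flats M).filter (fun y => x ⊆ y),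
    mob M x y • (Polynomial.X ^ x.card *
      Polynomial.C (Polynomial.X ^ (mrk M Finset.univ - mrk M y)))

/-- The uniform matroid of rank `m` on `Fin n`: the independent sets are
exactly the subsets of size at most `m`. -/
noncomputable def unif (n m : ℕ) : Matroid (Fin n) :=
  (IndepMatroid.ofFinite (Set.finite_univ (α := Fin n))
    (fun I => I.ncard ≤ m)
    (by simp)
    (fun I J hJ hIJ => le_trans (Set.ncard_le_ncard hIJ (Set.toFinite J)) hJ)
    (fun I J hI hJ hIJ => by
      obtain ⟨e, heJ, heI⟩ : ∃ e ∈ J, e ∉ I := by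
        by_contra h
        push_neg at h
        exact absurd (Set.ncard_le_ncard h (Set.toFinite I)) (not_le.mpr hIJ)
      refine ⟨e, heJ, heI, ?_⟩
      show (insert e I).ncard ≤ m
      rw [Set.ncard_insert_of_notMem heI (Set.toFinite I)]
      exact le_trans (Nat.succ_le_of_lt hIJ) hJ
    )
    (fun I _ => Set.subset_univ I)).matroid

/-- `X_{n,e}`: the coboundary polynomial of the uniform matroid of rank
`n - e + 1` on `n` elements, with coefficients viewed as rational functions
in the variable `T`. -/
noncomputable def XunifR (n e : ℕ) : Polynomial (RatFunc ℚ) :=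
  (cobPoly (unif n (n - e + 1))).map
    ((algebraMap (Polynomial ℚ) (RatFunc ℚ)).comp (Polynomial.mapRingHom (Int.castRingHom ℚ)))

/-- The coboundary polynomial of a matroid with coefficients viewed as
rational functions in the variable `T`. -/
noncomputable def cobPolyR [Fintype α] (M : Matroid α) : Polynomial (RatFunc ℚ) :=
  (cobPoly M).map
    ((algebraMap (Polynomial ℚ) (RatFunc ℚ)).comp (Polynomial.mapRingHom (Int.castRingHom ℚ)))


section RankBridge
variable [Fintype α] {M : Matroid α} {x y I J : Finset α}

lemma le_mrk_of_indep (hIx : I ⊆ x) (hI : M.Indep ↑I) : I.card ≤ mrk M x :=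
  Finset.le_sup (f := Finset.card) (by simp [Finset.mem_filter, Finset.mem_powerset, hIx, hI])

lemma mrk_le_card (M : Matroid α) (x : Finset α) : mrk M x ≤ x.card := by
  refine Finset.sup_le fun I hI => ?_
  simp only [Finset.mem_filter, Finset.mem_powerset] at hI
  exact Finset.card_le_card hI.1

lemma mrk_mono (M : Matroid α) (h : x ⊆ y) : mrk M x ≤ mrk M y := by
  refine Finset.sup_le fun I hI => ?_
  simp only [Finset.mem_filter, Finset.mem_powerset] at hI
  exact le_mrk_of_indep (hI.1.trans h) hI.2

lemma exists_indep_card_mrk (M : Matroid α) (x : Finset α) :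
    ∃ I, I ⊆ x ∧ M.Indep ↑I ∧ I.card = mrk M x := by
  have hne : (x.powerset.filter (fun (I : Finset α) => M.Indep (I : Set α))).Nonempty :=
    ⟨∅, by simp⟩
  obtain ⟨I, hI, hcard⟩ := Finset.exists_mem_eq_sup _ hne Finset.card
  simp only [Finset.mem_filter, Finset.mem_powerset] at hI
  exact ⟨I, hI.1, hI.2, hcard.symm⟩

lemma indep_coe_iff_mrk_eq_card : M.Indep ↑x ↔ mrk M x = x.card := by
  constructor
  · intro h
    exact le_antisymm (mrk_le_card M x) (le_mrk_of_indep Finset.Subset.rfl h)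
  · intro h
    obtain ⟨I, hIx, hI, hcard⟩ := exists_indep_card_mrk M x
    rwa [Finset.eq_of_subset_of_card_le hIx (by omega)] at hI

lemma mrk_eq_ncard_of_basis {I : Set α} (hI : M.IsBasis I ↑x) : mrk M x = I.ncard := by
  have hfin : I.Finite := Set.toFinite I
  refine le_antisymm ?_ ?_
  · obtain ⟨J, hJx, hJ, hcard⟩ := exists_indep_card_mrk M x
    obtain ⟨K, hK, hJK⟩ := hJ.subset_isBasis_of_subset (by exact_mod_cast hJx) hI.subset_ground
    have : K.encard = I.encard := hK.encard_eq_encard hI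
    have h1 : (J : Set α).encard ≤ K.encard := Set.encard_le_encard hJK
    rw [this] at h1
    rw [← hcard]
    have : (J : Set α).encard = J.card := by simp [Set.encard_coe_eq_coe_finsetCard]
    rw [this, hfin.encard_eq_coe_toFinset_card] at h1
    simpa [Set.ncard_eq_toFinset_card'] using (by exact_mod_cast h1 : J.card ≤ hfin.toFinset.card)
  · have : hfin.toFinset ⊆ x := by
      intro a ha
      simpa using hI.subset (hfin.mem_toFinset.1 ha)
    have h2 := le_mrk_of_indep this (by simpa using hI.indep)
    simpa [Set.ncard_eq_toFinset_card'] using h2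

lemma mrk_le_mrk_univ (M : Matroid α) (x : Finset α) : mrk M x ≤ mrk M Finset.univ :=
  mrk_mono M (Finset.subset_univ x)

end RankBridge

section FlatsRank
variable [Fintype α] {M : Matroid α} {x y : Finset α}

lemma mem_flats_iff : x ∈ flats M ↔ M.IsFlat ↑x := by simp [flats]

lemma mrk_lt_of_flat_ssubset (hE : M.E = Set.univ) (hx : M.IsFlat ↑x) (hy : M.IsFlat ↑y)
    (hxy : x ⊂ y) : mrk M x < mrk M y := by
  obtain ⟨I, hI⟩ := M.exists_isBasis ↑x (by rw [hE]; exact Set.subset_univ _)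
  obtain ⟨e, hey, hex⟩ := Finset.exists_of_ssubset hxy
  have hclI : M.closure I = ↑x := by
    rw [hI.closure_eq_closure, hx.closure]
  have heI : e ∉ I := fun h => hex (hI.subset h)
  have hins : M.Indep (insert e ↑I) := by
    rw [hI.indep.insert_indep_iff_of_notMem heI, hclI]
    exact ⟨by rw [hE]; trivial, by exact_mod_cast hex⟩
  have hfin : I.Finite := Set.toFinite I
  have hsub : insert e hfin.toFinset ⊆ y := by
    intro a ha
    rcases Finset.mem_insert.1 ha with rfl | ha
    · exact hey
    · exact hxy.1 (hI.subset (hfin.mem_toFinset.1 ha))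
  have hle := le_mrk_of_indep hsub (by
    push_cast
    simpa [Set.Finite.coe_toFinset] using hins)
  have hcard : (insert e hfin.toFinset).card = hfin.toFinset.card + 1 := by
    rw [Finset.card_insert_of_notMem (by simpa using heI)]
  rw [mrk_eq_ncard_of_basis hI, Set.ncard_eq_toFinset_card _ hfin]
  omega

lemma flat_eq_of_mrk_le (hE : M.E = Set.univ) (hx : M.IsFlat ↑x) (hy : M.IsFlat ↑y)
    (hxy : x ⊆ y) (hr : mrk M y ≤ mrk M x) : x = y := by
  by_contra hne
  exact absurd hr (not_le.2 (mrk_lt_of_flat_ssubset hE hx hy ⟨hxy, fun h => hne (subset_antisymm hxy h)⟩))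

lemma mrk_closure_toFinset (hE : M.E = Set.univ) (x : Finset α) :
    mrk M (M.closure ↑x).toFinset = mrk M x := by
  obtain ⟨I, hI⟩ := M.exists_isBasis ↑x (by rw [hE]; exact Set.subset_univ _)
  have hI2 : M.IsBasis I (M.closure ↑x) := hI.isBasis_closure_right
  rw [mrk_eq_ncard_of_basis (x := (M.closure ↑x).toFinset) (by simpa using hI2),
    mrk_eq_ncard_of_basis hI]

lemma mrk_empty (M : Matroid α) : mrk M (∅ : Finset α) = 0 :=
  Nat.le_antisymm (by simpa using mrk_le_card M ∅) (Nat.zero_le _)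

lemma mob_self (M : Matroid α) (x : Finset α) : mob M x x = 1 := by
  rw [mob]; simp

end FlatsRank

section CoeffMachine
variable [Fintype α]

lemma cobPoly_coeff_coeff (N : Matroid α) (j t : ℕ) :
    ((cobPoly N).coeff j).coeff t =
      ∑ x ∈ (flats N).filter (fun x => x.card = j),
        ∑ y ∈ (flats N).filter (fun y => x ⊆ y),
          (if mrk N Finset.univ - mrk N y = t then mob N x y else 0) := by
  simp only [cobPoly, Polynomial.finset_sum_coeff, Polynomial.coeff_smul]
  rw [Finset.sum_filter]
  refine Finset.sum_congr rfl fun x _ => ?_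
  have hterm : ∀ c e : ℕ,
      (((Polynomial.X : Polynomial (Polynomial ℤ)) ^ c *
        Polynomial.C ((Polynomial.X : Polynomial ℤ) ^ e)).coeff j).coeff t =
        if c = j ∧ e = t then 1 else 0 := by
    intro c e
    rw [mul_comm, Polynomial.C_mul_X_pow_eq_monomial, Polynomial.coeff_monomial]
    by_cases hc : c = j
    · simp [hc, Polynomial.coeff_X_pow, eq_comm]
    · simp [hc, Ne.symm hc]
  simp only [hterm, smul_eq_mul, mul_ite, mul_one, mul_zero]
  by_cases hc : #x = j
  · simp [hc]
  · simp [hc]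

end CoeffMachine

section CoeffLemmas
variable [Fintype α] {N : Matroid α} {j t : ℕ}

lemma coeff_zero_of_no_flats (h : ∀ x ∈ flats N, x.card ≠ j) (t : ℕ) :
    ((cobPoly N).coeff j).coeff t = 0 := by
  rw [cobPoly_coeff_coeff]
  rw [Finset.filter_false_of_mem (fun x hx => h x hx), Finset.sum_empty]

lemma coeff_zero_of_gt_rank (ht : mrk N Finset.univ < t) :
    ((cobPoly N).coeff j).coeff t = 0 := by
  rw [cobPoly_coeff_coeff]
  refine Finset.sum_eq_zero fun x _ => Finset.sum_eq_zero fun y _ => ?_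
  rw [if_neg]
  omega

lemma coeff_zero_of_all_ge (hall : ∀ x ∈ flats N, x.card = j → j ≤ mrk N x)
    (ht : mrk N Finset.univ - j < t) :
    ((cobPoly N).coeff j).coeff t = 0 := by
  rw [cobPoly_coeff_coeff]
  refine Finset.sum_eq_zero fun x hx => Finset.sum_eq_zero fun y hy => ?_
  simp only [Finset.mem_filter] at hx hy
  have h1 : j ≤ mrk N x := hall x hx.1 hx.2
  have h2 : mrk N x ≤ mrk N y := mrk_mono N hy.2
  rw [if_neg]
  omega

lemma coeff_min_rank (hE : N.E = Set.univ) {x0 : Finset α} {r0 : ℕ}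
    (hx0 : x0 ∈ flats N) (hx0c : x0.card = j)
    (hmin : ∀ x ∈ flats N, x.card = j → r0 ≤ mrk N x) (hx0r : mrk N x0 = r0) :
    ((cobPoly N).coeff j).coeff (mrk N Finset.univ - r0) =
      (((flats N).filter fun x => x.card = j ∧ mrk N x = r0).card : ℤ) := by
  have hr0k : r0 ≤ mrk N Finset.univ := hx0r ▸ mrk_le_mrk_univ N x0
  rw [cobPoly_coeff_coeff]
  have hstep : ∀ x ∈ (flats N).filter (fun x => x.card = j),
      (∑ y ∈ (flats N).filter (fun y => x ⊆ y),
        (if mrk N Finset.univ - mrk N y = mrk N Finset.univ - r0 then mob N x y else 0)) =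
      if mrk N x = r0 then 1 else 0 := by
    intro x hx
    simp only [Finset.mem_filter] at hx
    by_cases hxr : mrk N x = r0
    · rw [if_pos hxr]
      rw [Finset.sum_eq_single x]
      · rw [hxr, if_pos rfl, mob_self]
      · intro y hy hyx
        simp only [Finset.mem_filter] at hy
        have hlt : mrk N x < mrk N y := mrk_lt_of_flat_ssubset hE
          (mem_flats_iff.1 hx.1) (mem_flats_iff.1 hy.1) ⟨hy.2, fun h => hyx (subset_antisymm h hy.2)⟩
        have hyk : mrk N y ≤ mrk N Finset.univ := mrk_le_mrk_univ N y
        rw [if_neg]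
        omega
      · intro hxmem
        exact absurd (Finset.mem_filter.2 ⟨hx.1, Finset.Subset.rfl⟩) hxmem
    · rw [if_neg hxr]
      refine Finset.sum_eq_zero fun y hy => ?_
      simp only [Finset.mem_filter] at hy
      have h1 : r0 ≤ mrk N x := hmin x hx.1 hx.2
      have h2 : mrk N x ≤ mrk N y := mrk_mono N hy.2
      have hyk : mrk N y ≤ mrk N Finset.univ := mrk_le_mrk_univ N y
      rw [if_neg]
      omega
  rw [Finset.sum_congr rfl hstep, Finset.sum_boole, Finset.filter_filter]

end CoeffLemmas

section Threshold

lemma flat_closure (M : Matroid α) (X : Set α) : M.IsFlat (M.closure X) := by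
  constructor
  · intro I Y hI hIY
    have h1 : Y ⊆ M.closure I := hIY.subset_closure
    have h2 : M.closure I = M.closure (M.closure X) := hI.closure_eq_closure
    rwa [h2, Matroid.closure_closure] at h1
  · exact M.closure_subset_ground X

lemma girth_le_ncard_of_circuit {M : Matroid α} {C : Set α} (hC : IsCircuit M C) :
    girth M ≤ C.ncard :=
  Nat.sInf_le ⟨C, hC, rfl⟩

lemma exists_circuit_subset_of_dep [Fintype α] {M : Matroid α} {x : Set α} (hx : M.Dep x) :
    ∃ C ⊆ x, IsCircuit M C := by
  by_cases h : ∀ D ⊂ x, M.Indep D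
  · exact ⟨x, subset_rfl, hx, h⟩
  · push_neg at h
    obtain ⟨D, hDx, hD⟩ := h
    have hDdep : M.Dep D := ⟨hD, hDx.1.trans hx.subset_ground⟩
    have : D.ncard < x.ncard := Set.ncard_lt_ncard hDx (Set.toFinite x)
    obtain ⟨C, hCD, hC⟩ := exists_circuit_subset_of_dep hDdep
    exact ⟨C, hCD.trans hDx.1, hC⟩
termination_by x.ncard

lemma indep_singleton_of_girth {M : Matroid α} [Fintype α] (hE : M.E = Set.univ)
    (hg : 2 < girth M) (e : α) : M.Indep {e} := by
  by_contra h
  have hdep : M.Dep {e} := ⟨h, by rw [hE]; exact Set.subset_univ _⟩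
  obtain ⟨C, hCe, hC⟩ := exists_circuit_subset_of_dep hdep
  have h1 : C.ncard ≤ 1 := le_trans (Set.ncard_le_ncard hCe (Set.toFinite _)) (by simp)
  have := girth_le_ncard_of_circuit hC
  omega

lemma closure_empty_of_loopless [Fintype α] {M : Matroid α}
    (h : ∀ e : α, M.Indep {e}) : M.closure ∅ = ∅ := by
  ext e
  simp only [Set.mem_empty_iff_false, iff_false]
  intro he
  rw [M.empty_indep.mem_closure_iff] at he
  rcases he with he | he
  · have heq : (insert e (∅ : Set α)) = {e} := by simp
    rw [heq] at he
    exact he.not_indep (h e)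
  · exact he

variable [Fintype α] {M : Matroid α} {m : ℕ}

/-- Threshold hypothesis -/
def Thr (M : Matroid α) (m : ℕ) : Prop := M.E = Set.univ ∧ ∀ x : Set α, M.Indep x ↔ x.ncard ≤ m

lemma Thr.ncard_univ (_h : Thr M m) : (Set.univ : Set α).ncard = Fintype.card α := by
  rw [Set.ncard_univ, Nat.card_eq_fintype_card]

lemma Thr.girth_eq (h : Thr M m) (hm : m < Fintype.card α) : girth M = m + 1 := by
  obtain ⟨c, -, hc⟩ := Set.exists_subset_card_eq (s := (Set.univ : Set α))
    (n := m + 1) (by rw [h.ncard_univ]; omega)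
  have hcirc : IsCircuit M c := by
    refine ⟨⟨fun hi => by rw [h.2] at hi; omega, by rw [h.1]; exact Set.subset_univ _⟩, ?_⟩
    intro D hD
    rw [h.2]
    have := Set.ncard_lt_ncard hD (Set.toFinite c)
    omega
  refine le_antisymm (by simpa [hc] using girth_le_ncard_of_circuit hcirc) ?_
  refine le_csInf ⟨m + 1, c, hcirc, hc⟩ ?_
  rintro b ⟨C, hC, rfl⟩
  have := hC.1.not_indep
  rw [h.2] at this
  omega

lemma Thr.girth_eq_zero (h : Thr M m) (hm : Fintype.card α ≤ m) : girth M = 0 := by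
  have : {k | ∃ C, IsCircuit M C ∧ C.ncard = k} = ∅ := by
    ext k
    simp only [Set.mem_setOf_eq, Set.mem_empty_iff_false, iff_false]
    rintro ⟨C, hC, rfl⟩
    refine hC.1.not_indep ((h.2 C).2 ?_)
    exact le_trans (Set.ncard_le_ncard (Set.subset_univ C) (Set.toFinite _)) (by rw [h.ncard_univ]; omega)
  rw [girth, this, Nat.sInf_empty]

lemma Thr.base_iff (h : Thr M m) (hm : m ≤ Fintype.card α) {B : Set α} :
    M.IsBase B ↔ B.ncard = m := by
  constructor
  · intro hB
    have h1 : B.ncard ≤ m := (h.2 B).1 hB.indep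
    by_contra hne
    have h2 : B.ncard < m := by omega
    have hBne : B ≠ Set.univ := by
      rintro rfl
      rw [h.ncard_univ] at h2; omega
    obtain ⟨e, he⟩ := (Set.ne_univ_iff_exists_notMem B).1 hBne
    have hins : M.Indep (insert e B) := by
      rw [h.2, Set.ncard_insert_of_notMem he (Set.toFinite B)]
      omega
    have heq := hB.eq_of_subset_indep hins (Set.subset_insert e B)
    exact he (heq ▸ Set.mem_insert e B)
  · intro hB
    refine ((h.2 B).2 (le_of_eq hB)).isBase_of_maximal fun J hJ hBJ => ?_
    have : J.ncard ≤ m := (h.2 J).1 hJ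
    exact Set.eq_of_subset_of_ncard_le hBJ (by omega) (Set.toFinite J)

lemma Thr.dual (h : Thr M m) (hm : m ≤ Fintype.card α) : Thr M✶ (Fintype.card α - m) := by
  refine ⟨h.1, fun x => ?_⟩
  rw [Matroid.dual_indep_iff_exists' ]
  constructor
  · rintro ⟨-, B, hB, hdisj⟩
    rw [h.base_iff hm] at hB
    have hsub : x ∪ B ⊆ Set.univ := Set.subset_univ _
    have := Set.ncard_union_eq hdisj (Set.toFinite x) (Set.toFinite B)
    have h2 : (x ∪ B).ncard ≤ Fintype.card α := by
      rw [← h.ncard_univ]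
      exact Set.ncard_le_ncard hsub (Set.toFinite _)
    omega
  · intro hx
    have hcompl : (Set.univ \ x).ncard = Fintype.card α - x.ncard := by
      rw [Set.ncard_diff (Set.subset_univ x) (Set.toFinite _), h.ncard_univ]
    obtain ⟨B, hBsub, hBcard⟩ := Set.exists_subset_card_eq (s := Set.univ \ x) (n := m) (by omega)
    refine ⟨by rw [h.1]; exact Set.subset_univ x, B, (h.base_iff hm).2 hBcard, ?_⟩
    rw [Set.disjoint_right]
    intro a haB hax
    exact (hBsub haB).2 hax

lemma Thr.mrk_univ (h : Thr M m) (hm : m ≤ Fintype.card α) : mrk M Finset.univ = m := by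
  refine le_antisymm ?_ ?_
  · obtain ⟨I, -, hI, hIc⟩ := exists_indep_card_mrk M Finset.univ
    rw [h.2] at hI
    rw [← hIc]
    simpa using hI
  · obtain ⟨t, -, ht⟩ := Finset.exists_subset_card_eq (s := (Finset.univ : Finset α)) (n := m)
      (by simpa using hm)
    refine le_trans (le_of_eq ht.symm) (le_mrk_of_indep (Finset.subset_univ t) ?_)
    rw [h.2]
    simpa using le_of_eq ht

lemma Thr.flat_card_lt (h : Thr M m) (hm : m ≤ Fintype.card α) {F : Finset α}
    (hF : M.IsFlat ↑F) (hne : F ≠ Finset.univ) : F.card < m := by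
  by_contra hge
  obtain ⟨B, hBF, hBcard⟩ := Finset.exists_subset_card_eq (s := F) (n := m) (by omega)
  have hBbase : M.IsBase ↑B := (h.base_iff hm).2 (by simpa using hBcard)
  have hspan : M.Spanning ↑F := hBbase.spanning_of_superset (by exact_mod_cast hBF)
    (by rw [h.1]; exact Set.subset_univ _)
  have : (F : Set α) = Set.univ := by rw [← hF.closure, ← h.1, hspan.closure_eq]
  exact hne (by simpa using Finset.coe_injective (by simpa using this))

end Threshold

section UnifFacts

lemma unif_ground (n m : ℕ) : (unif n m).E = Set.univ := rfl

lemma unif_indep_iff {n m : ℕ} {x : Set (Fin n)} : (unif n m).Indep x ↔ x.ncard ≤ m := by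
  simp [unif]

lemma unif_thr (n m : ℕ) : Thr (unif n m) m := ⟨rfl, fun _ => unif_indep_iff⟩

end UnifFacts

section TopCoeff
variable [Fintype α]

lemma flats_filter_card_univ (N : Matroid α) (hE : N.E = Set.univ) :
    (flats N).filter (fun x => x.card = Fintype.card α) = {Finset.univ} := by
  ext x
  simp only [Finset.mem_filter, Finset.mem_singleton, mem_flats_iff]
  constructor
  · rintro ⟨-, hc⟩
    exact Finset.eq_univ_of_card x hc
  · rintro rfl
    refine ⟨?_, Finset.card_univ⟩
    rw [Finset.coe_univ, ← hE]
    exact N.ground_isFlat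

lemma cobPoly_coeff_top (N : Matroid α) (hE : N.E = Set.univ) :
    (cobPoly N).coeff (Fintype.card α) = 1 := by
  have huniv : Finset.univ ∈ flats N := by
    rw [mem_flats_iff, Finset.coe_univ, ← hE]; exact N.ground_isFlat
  ext t
  rw [cobPoly_coeff_coeff, flats_filter_card_univ N hE, Finset.sum_singleton]
  have hfilt : (flats N).filter (fun y => Finset.univ ⊆ y) = {Finset.univ} := by
    ext y
    simp only [Finset.mem_filter, Finset.mem_singleton]
    constructor
    · rintro ⟨-, hy⟩
      exact Finset.univ_subset_iff.1 hy
    · rintro rfl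
      exact ⟨huniv, Finset.Subset.rfl⟩
  rw [hfilt, Finset.sum_singleton, Nat.sub_self, mob_self]
  simp [Polynomial.coeff_one, eq_comm]

end TopCoeff

section Engine

lemma flat_empty_of_loopless [Fintype α] {M : Matroid α} (h : ∀ e : α, M.Indep {e}) :
    M.IsFlat (∅ : Set α) :=
  closure_empty_of_loopless h ▸ flat_closure M ∅

lemma flats_filter_card_zero {γ : Type*} [Fintype γ] (L : Matroid γ)
    (h0 : (∅ : Finset γ) ∈ flats L) :
    (flats L).filter (fun x => x.card = 0 ∧ mrk L x = 0) = {∅} := by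
  ext x
  simp only [Finset.mem_filter, Finset.mem_singleton, Finset.card_eq_zero]
  constructor
  · rintro ⟨-, rfl, -⟩; rfl
  · rintro rfl; exact ⟨h0, rfl, mrk_empty L⟩

lemma main_engine {α : Type*} {β : Type*} [Fintype α] [Fintype β]
    (M : Matroid α) (N : Matroid β) (hcard : Fintype.card α = Fintype.card β)
    (hE : M.E = Set.univ) (hg : 2 < girth M)
    {m' : ℕ} (hN : Thr N m') (hm'1 : 1 ≤ m') (hm'n : m' ≤ Fintype.card β)
    (hpoly : cobPoly M = cobPoly N) :
    ∀ x : Set α, M.Indep x ↔ x.ncard ≤ mrk M Finset.univ := by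
  classical
  set k := mrk M Finset.univ with hk
  -- looplessness and the empty flat, on both sides
  have hloopM : ∀ e : α, M.Indep {e} := indep_singleton_of_girth hE hg
  have hflat0M : (∅ : Finset α) ∈ flats M := by
    rw [mem_flats_iff, Finset.coe_empty]
    exact flat_empty_of_loopless hloopM
  have hloopN : ∀ e : β, N.Indep {e} := fun e => (hN.2 _).2 (by simp [hm'1])
  have hflat0N : (∅ : Finset β) ∈ flats N := by
    rw [mem_flats_iff, Finset.coe_empty]
    exact flat_empty_of_loopless hloopN
  have hrkN : mrk N Finset.univ = m' := hN.mrk_univ hm'n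
  -- the coefficient of `S^0 T^(rank)` is 1 on both sides
  have hcM : ((cobPoly M).coeff 0).coeff k = 1 := by
    have := coeff_min_rank (N := M) (j := 0) hE hflat0M (Finset.card_empty)
      (fun x _ _ => Nat.zero_le _) (mrk_empty M)
    rw [Nat.sub_zero, flats_filter_card_zero M hflat0M] at this
    simpa using this
  have hcN : ((cobPoly N).coeff 0).coeff m' = 1 := by
    have := coeff_min_rank (N := N) (j := 0) hN.1 hflat0N (Finset.card_empty)
      (fun x _ _ => Nat.zero_le _) (mrk_empty N)
    rw [Nat.sub_zero, flats_filter_card_zero N hflat0N, hrkN] at this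
    simpa using this
  -- ranks agree
  have hkm : k = m' := by
    by_contra hne
    rcases Nat.lt_or_ge k m' with hlt | hge
    · have h0 : ((cobPoly M).coeff 0).coeff m' = 0 :=
        coeff_zero_of_gt_rank (by omega)
      rw [hpoly, hcN] at h0
      exact one_ne_zero h0
    · have hlt : m' < k := by omega
      have h0 : ((cobPoly N).coeff 0).coeff k = 0 :=
        coeff_zero_of_gt_rank (by rw [hrkN]; omega)
      rw [← hpoly, hcM] at h0
      exact one_ne_zero h0
  -- every proper flat of `M` is independent
  have hproper : ∀ F : Finset α, F ∈ flats M → F ≠ Finset.univ → mrk M F = F.card := by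
    intro F hF hFne
    by_contra hbad
    have hle : mrk M F ≤ F.card := mrk_le_card M F
    have hlt : mrk M F < F.card := lt_of_le_of_ne hle hbad
    set j := F.card with hj
    have hjn : j < Fintype.card α := by
      rw [hj, ← Finset.card_univ]
      exact Finset.card_lt_card (Finset.ssubset_univ_iff.2 hFne)
    -- minimum rank among size-j flats of M
    set S := (flats M).filter (fun x => x.card = j) with hS
    have hFS : F ∈ S := Finset.mem_filter.2 ⟨hF, rfl⟩
    set T := S.image (mrk M) with hT
    have hTne : T.Nonempty := ⟨mrk M F, Finset.mem_image_of_mem _ hFS⟩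
    set r0 := T.min' hTne with hr0
    obtain ⟨x0, hx0S, hx0r⟩ := Finset.mem_image.1 (T.min'_mem hTne)
    have hx0S' := Finset.mem_filter.1 hx0S
    have hmin : ∀ x ∈ flats M, x.card = j → r0 ≤ mrk M x := by
      intro x hx hxc
      exact Finset.min'_le T _ (Finset.mem_image_of_mem _ (Finset.mem_filter.2 ⟨hx, hxc⟩))
    have hr0lt : r0 < j := lt_of_le_of_lt (hmin F hF rfl) hlt
    have hA := coeff_min_rank (N := M) hE hx0S'.1 hx0S'.2 hmin hx0r
    have hApos : ((cobPoly M).coeff j).coeff (k - r0) ≠ 0 := by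
      rw [hA]
      have : x0 ∈ (flats M).filter fun x => x.card = j ∧ mrk M x = r0 :=
        Finset.mem_filter.2 ⟨hx0S'.1, hx0S'.2, hx0r⟩
      have hpos : 0 < ((flats M).filter fun x => x.card = j ∧ mrk M x = r0).card :=
        Finset.card_pos.2 ⟨x0, this⟩
      exact_mod_cast Nat.pos_iff_ne_zero.1 hpos
    rw [hpoly] at hApos
    rcases Nat.lt_or_ge j m' with hjm | hjm
    · -- all size-j flats of N are independent, giving a degree bound
      have hallN : ∀ x ∈ flats N, x.card = j → j ≤ mrk N x := by
        intro x hx hxc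
        have hxflat := mem_flats_iff.1 hx
        have hxind : N.Indep ↑x := by
          rw [hN.2]
          simp only [Set.ncard_coe_finset]
          omega
        rw [indep_coe_iff_mrk_eq_card.1 hxind, hxc]
      exact hApos (coeff_zero_of_all_ge hallN (by rw [hrkN, ← hkm]; omega))
    · -- N has no flats of size j at all
      have hnone : ∀ x ∈ flats N, x.card ≠ j := by
        intro x hx hxc
        by_cases hxu : x = Finset.univ
        · rw [hxu, Finset.card_univ] at hxc
          omega
        · have := hN.flat_card_lt hm'n (mem_flats_iff.1 hx) hxu
          omega
      exact hApos (coeff_zero_of_no_flats hnone _)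
  -- conclude the threshold property
  intro x
  constructor
  · intro hx
    have hx' : M.Indep ↑x.toFinset := by rwa [Set.coe_toFinset]
    have h2 := le_mrk_of_indep (Finset.subset_univ x.toFinset) hx'
    rwa [Set.ncard_eq_toFinset_card']

  · intro hcard'
    by_contra hnind
    have hxE : x ⊆ M.E := by rw [hE]; exact Set.subset_univ x
    have hdep : M.Dep x := ⟨hnind, hxE⟩
    set F := (M.closure x).toFinset with hF
    have hFflat : M.IsFlat ↑F := by
      rw [hF, Set.coe_toFinset]
      exact flat_closure M x
    have hFmem : F ∈ flats M := mem_flats_iff.2 hFflat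
    have hclx : M.closure ↑x.toFinset = M.closure x := by rw [Set.coe_toFinset]
    have hmrkF : mrk M F = mrk M x.toFinset := by
      have := mrk_closure_toFinset hE x.toFinset
      rwa [hclx] at this
    have hxlt : mrk M x.toFinset < x.toFinset.card := by
      have hle := mrk_le_card M x.toFinset
      have hne : mrk M x.toFinset ≠ x.toFinset.card := by
        intro h
        exact hnind (by rwa [← Set.coe_toFinset x, indep_coe_iff_mrk_eq_card])
      omega
    have hxk : x.toFinset.card ≤ k := by rwa [Set.ncard_eq_toFinset_card'] at hcard'
    have hFne : F ≠ Finset.univ := by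
      intro h
      have : mrk M F = k := by rw [h]
      omega
    have hFcard : x.toFinset.card ≤ F.card := by
      apply Finset.card_le_card
      intro a ha
      rw [hF, Set.mem_toFinset]
      exact M.subset_closure x hxE (Set.mem_toFinset.1 ha)
    have := hproper F hFmem hFne
    omega

end Engine

section Final

lemma girth_le_card [Fintype α] (M : Matroid α) (h : 0 < girth M) :
    girth M ≤ Fintype.card α := by
  have hS : {k | ∃ C, IsCircuit M C ∧ C.ncard = k}.Nonempty := by
    by_contra hne
    rw [Set.not_nonempty_iff_eq_empty] at hne
    rw [girth, hne, Nat.sInf_empty] at h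
    omega
  obtain ⟨C, hC, hCcard⟩ := Nat.sInf_mem hS
  rw [girth, ← hCcard]
  calc C.ncard ≤ (Set.univ : Set α).ncard := Set.ncard_le_ncard (Set.subset_univ C) (Set.toFinite _)
    _ = Fintype.card α := by rw [Set.ncard_univ, Nat.card_eq_fintype_card]

theorem uniform_iff_zeta_coeffs' {α : Type*} [Fintype α] (M : Matroid α)
    (hE : M.E = Set.univ) (n : ℕ) (hn : n = Fintype.card α)
    (hsimple : 2 < girth M) (hdualsimple : 2 < girth M✶)
    (P : ℕ → RatFunc ℚ)
    (hP : cobPolyR M =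
      ∑ i ∈ Finset.range (n + 2 - cogirth M - girth M + 1),
        Polynomial.C (P i) * XunifR n (cogirth M + i)) :
    (∃ m : ℕ, ∀ x : Set α, x ⊆ M.E → (M.Indep x ↔ x.ncard ≤ m)) ↔
      (P 0 = 1 ∧ ∀ i : ℕ, 1 ≤ i → i ≤ n + 2 - cogirth M - girth M → P i = 0) := by
  constructor
  · rintro ⟨m, hm⟩
    have hThr : Thr M m := ⟨hE, fun x => hm x (by rw [hE]; exact Set.subset_univ x)⟩
    have hmn : m < Fintype.card α := by
      by_contra h
      push_neg at h
      have := hThr.girth_eq_zero h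
      omega
    have hgM : girth M = m + 1 := hThr.girth_eq hmn
    have hm2 : 2 ≤ m := by omega
    have hdual : Thr M✶ (Fintype.card α - m) := hThr.dual (le_of_lt hmn)
    have hco : cogirth M = Fintype.card α - m + 1 := hdual.girth_eq (by omega)
    have hr : n + 2 - cogirth M - girth M = 0 := by
      rw [hco, hgM, hn]
      omega
    rw [hr, Finset.range_one, Finset.sum_singleton] at hP
    have h1 : (cobPolyR M).coeff n = 1 := by
      rw [cobPolyR, Polynomial.coeff_map, hn, cobPoly_coeff_top M hE, map_one]
    have h2 : (XunifR n (cogirth M + 0)).coeff n = 1 := by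
      rw [XunifR, Polynomial.coeff_map]
      have h3 := cobPoly_coeff_top (unif n (n - (cogirth M + 0) + 1)) (unif_ground _ _)
      rw [Fintype.card_fin] at h3
      rw [h3, map_one]
    have hc := congrArg (fun p => Polynomial.coeff p n) hP
    simp only [Polynomial.coeff_C_mul, h2, mul_one] at hc
    rw [h1] at hc
    refine ⟨hc.symm, fun i hi1 hi2 => ?_⟩
    rw [hr] at hi2
    omega
  · rintro ⟨hP0, hPi⟩
    have hd3 : 3 ≤ cogirth M := hdualsimple
    have hdn : cogirth M ≤ n := by
      rw [hn]
      exact girth_le_card M✶ (by change 0 < cogirth M; omega)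
    have hsum : cobPolyR M = XunifR n (cogirth M) := by
      rw [hP, Finset.sum_eq_single_of_mem 0 (Finset.mem_range.2 (Nat.succ_pos _))]
      · rw [hP0, map_one, one_mul, Nat.add_zero]
      · intro b hb hb0
        rw [hPi b (by omega) (by have := Finset.mem_range.1 hb; omega), map_zero, zero_mul]
    rw [cobPolyR, XunifR] at hsum
    have hinj : Function.Injective
        ⇑((algebraMap (Polynomial ℚ) (RatFunc ℚ)).comp (Polynomial.mapRingHom (Int.castRingHom ℚ))) := by
      rw [RingHom.coe_comp, Polynomial.coe_mapRingHom]
      exact Function.Injective.comp (RatFunc.algebraMap_injective ℚ)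
        (Polynomial.map_injective (Int.castRingHom ℚ) Int.cast_injective)
    have hpoly : cobPoly M = cobPoly (unif n (n - cogirth M + 1)) :=
      Polynomial.map_injective _ hinj hsum
    have hcard : Fintype.card α = Fintype.card (Fin n) := by
      rw [Fintype.card_fin, hn]
    have hmain := main_engine M (unif n (n - cogirth M + 1)) hcard hE hsimple
      (unif_thr n (n - cogirth M + 1)) (by omega)
      (by rw [Fintype.card_fin]; omega) hpoly
    exact ⟨mrk M Finset.univ, fun x _ => hmain x⟩

end Final
/-- Let `M` be a finite simple matroid on `n` elements with
simple dual, girth `d*`, cogirth `d`, and `r = n - d - d* + 2`. If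
`P_0(T), …, P_r(T)` are the (unique) coefficients with
`χ_M(S,T) = Σ_{i=0}^r P_i(T) X_{n,d+i}(S,T)`, then `M` is a uniform matroid if
and only if `P_0(T) = 1` and `P_i(T) = 0` for all `i ≥ 1`. -/
theorem uniform_iff_zeta_coeffs {α : Type*} [Fintype α] (M : Matroid α)
    (hE : M.E = Set.univ) (n : ℕ) (hn : n = Fintype.card α)
    (hsimple : 2 < girth M) (hdualsimple : 2 < girth M✶)
    (P : ℕ → RatFunc ℚ)
    (hP : cobPolyR M =
      ∑ i ∈ Finset.range (n + 2 - cogirth M - girth M + 1),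
        Polynomial.C (P i) * XunifR n (cogirth M + i)) :
    (∃ m : ℕ, ∀ x : Set α, x ⊆ M.E → (M.Indep x ↔ x.ncard ≤ m)) ↔
      (P 0 = 1 ∧ ∀ i : ℕ, 1 ≤ i → i ≤ n + 2 - cogirth M - girth M → P i = 0) := by
  exact uniform_iff_zeta_coeffs' M hE n hn hsimple hdualsimple P hP

end PaperMatroid
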